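/- Let A ∈ ℝ^{n×n} and R^s ∈ ℝ^n the Rademacher diagonal estimator using s independent Rademacher query vectors, with s > 2 ln(2n/δ)/ε². Then with probability at least 1 − δ, Σ_{i=1}^n |R_i^s − A_{ii}|² ≤ ε² Σ_{i=1}^n (‖A_i‖₂² − A_{ii}²), i.e. ‖R^s − diag(A)‖₂² ≤ ε²(‖A‖_F² − ‖diag(A)‖₂²). -/

import Mathlib

open MeasureTheory ProbabilityTheory Matrix

/-- The Rademacher distribution on ℝ: ±1 with probability 1/2 each. -/
noncomputable def radMeasure : Measure ℝ :=
  (1/2 : ENNReal) • Measure.dirac 1 + (1/2 : ENNReal) • Measure.dirac (-1)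

lemma radIntegrable {f : ℝ → ℝ} (hf : Measurable f) : Integrable f radMeasure := by
  have h : ∀ a : ℝ, Integrable f ((1/2 : ENNReal) • Measure.dirac a) := by
    intro a
    refine Integrable.smul_measure ⟨hf.aestronglyMeasurable, ?_⟩ (by norm_num)
    rw [HasFiniteIntegral, lintegral_dirac]
    exact ENNReal.coe_lt_top
  exact h 1 |>.add_measure (h (-1))

lemma radIntegral {f : ℝ → ℝ} (hf : Measurable f) :
    ∫ x, f x ∂radMeasure = (f 1 + f (-1)) / 2 := by
  have h : ∀ a : ℝ, Integrable f ((1/2 : ENNReal) • Measure.dirac a) := by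
    intro a
    refine Integrable.smul_measure ⟨hf.aestronglyMeasurable, ?_⟩ (by norm_num)
    rw [HasFiniteIntegral, lintegral_dirac]
    exact ENNReal.coe_lt_top
  rw [radMeasure, integral_add_measure (h 1) (h (-1)), integral_smul_measure,
    integral_smul_measure, integral_dirac, integral_dirac]
  simp [ENNReal.toReal_div]
  ring

lemma radSet : radMeasure ({1, -1} : Set ℝ) = 1 := by
  rw [radMeasure]
  have h1 : (Measure.dirac (1:ℝ)) ({1, -1} : Set ℝ) = 1 :=
    Measure.dirac_apply_of_mem (by norm_num)
  have h2 : (Measure.dirac (-1:ℝ)) ({1, -1} : Set ℝ) = 1 :=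
    Measure.dirac_apply_of_mem (by norm_num)
  simp [Measure.add_apply, h1, h2]
  rw [ENNReal.inv_two_add_inv_two]

section Tail

variable {n s : ℕ} {Ω : Type*} [MeasureSpace Ω] [IsProbabilityMeasure (ℙ : Measure Ω)]

lemma integrable_of_bound {f : Ω → ℝ} (hf : AEStronglyMeasurable f ℙ) (C : ℝ)
    (h : ∀ᵐ ω ∂(ℙ : Measure Ω), |f ω| ≤ C) : Integrable f ℙ :=
  (integrable_const C).mono' hf (by simpa [Real.norm_eq_abs] using h)

lemma rad_pm (v : Ω → Fin s → Fin n → ℝ)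
    (hmeas : ∀ k j, Measurable (fun ω => v ω k j))
    (hdist : ∀ k j, Measure.map (fun ω => v ω k j) ℙ = radMeasure) :
    ∀ᵐ ω ∂(ℙ : Measure Ω), ∀ k j, v ω k j = 1 ∨ v ω k j = -1 := by
  rw [ae_all_iff]
  intro k
  rw [ae_all_iff]
  intro j
  have hset : MeasurableSet ({1, -1} : Set ℝ) :=
    (measurableSet_singleton _).insert 1
  have h1 : ℙ ((fun ω => v ω k j) ⁻¹' {1, -1}) = 1 := by
    rw [← Measure.map_apply (hmeas k j) hset, hdist k j, radSet]
  have h2 : ℙ (((fun ω => v ω k j) ⁻¹' {1, -1})ᶜ) = 0 := by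
    rw [measure_compl ((hmeas k j) hset) (measure_ne_top _ _), h1, measure_univ, tsub_self]
  rw [ae_iff]
  have hset2 : {ω | ¬(v ω k j = 1 ∨ v ω k j = -1)}
      = ((fun ω => v ω k j) ⁻¹' {1, -1})ᶜ := by
    ext ω
    simp only [Set.mem_compl_iff, Set.mem_preimage, Set.mem_insert_iff, Set.mem_singleton_iff,
      Set.mem_setOf_eq]
  rw [hset2]
  exact h2

lemma rad_mean (v : Ω → Fin s → Fin n → ℝ) (k : Fin s) (j : Fin n)
    (hmeas : ∀ k j, Measurable (fun ω => v ω k j))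
    (hdist : ∀ k j, Measure.map (fun ω => v ω k j) ℙ = radMeasure) :
    ∫ ω, v ω k j ∂(ℙ : Measure Ω) = 0 := by
  have h := integral_map (μ := (ℙ : Measure Ω)) (f := fun x : ℝ => x)
    (hmeas k j).aemeasurable aestronglyMeasurable_id
  rw [hdist k j] at h
  rw [← h, radIntegral measurable_id']
  norm_num

lemma rad_mgf1 (v : Ω → Fin s → Fin n → ℝ) (k : Fin s) (j : Fin n) (b t : ℝ)
    (hmeas : ∀ k j, Measurable (fun ω => v ω k j))
    (hdist : ∀ k j, Measure.map (fun ω => v ω k j) ℙ = radMeasure) :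
    mgf (fun ω => b * v ω k j) ℙ t = Real.cosh (t * b) := by
  have hm : Measurable fun x : ℝ => Real.exp (t * (b * x)) := by fun_prop
  have : mgf (fun ω => b * v ω k j) ℙ t
      = ∫ x, Real.exp (t * (b * x)) ∂(Measure.map (fun ω => v ω k j) ℙ) := by
    rw [mgf, integral_map (hmeas k j).aemeasurable hm.aestronglyMeasurable]
  rw [this, hdist k j, radIntegral hm, Real.cosh_eq]
  norm_num

end Tail

section Tail2

variable {n s : ℕ} {Ω : Type*} [MeasureSpace Ω] [IsProbabilityMeasure (ℙ : Measure Ω)]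

set_option maxHeartbeats 1000000 in
lemma rad_tail (v : Ω → Fin s → Fin n → ℝ)
    (hmeas : ∀ k j, Measurable (fun ω => v ω k j))
    (hdist : ∀ k j, Measure.map (fun ω => v ω k j) ℙ = radMeasure)
    (hindep : iIndepFun
      (fun p : Fin s × Fin n => fun ω => v ω p.1 p.2) ℙ)
    (c : Fin n → ℝ) (i : Fin n) (u a : ℝ) (hu : 0 ≤ u) :
    (ℙ {ω | a ≤ ∑ k : Fin s, ∑ j ∈ Finset.univ.erase i,
        c j * (v ω k i * v ω k j)}).toReal ≤
      Real.exp (-u * a + s * (u ^ 2 * (∑ j ∈ Finset.univ.erase i, c j ^ 2) / 2)) := by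
  classical
  set E : Finset (Fin n) := Finset.univ.erase i with hE
  set σ2 : ℝ := ∑ j ∈ E, c j ^ 2 with hσ2
  set M : ℝ := ∑ j ∈ E, |c j| with hM
  have hpm := rad_pm v hmeas hdist
  -- the family with coefficients
  set W : Fin s × Fin n → Ω → ℝ := fun p ω => c p.2 * v ω p.1 p.2 with hW
  have hWmeas : ∀ p, Measurable (W p) := fun p => (hmeas p.1 p.2).const_mul _
  have hWindep : iIndepFun W ℙ :=
    hindep.comp (fun p x => c p.2 * x) (fun p => measurable_id.const_mul _)
  -- the inner sums
  set Z : Fin s → Ω → ℝ := fun k => ∑ p ∈ ({k} ×ˢ E), W p with hZ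
  have hZmeas : ∀ k, Measurable (Z k) := by
    intro k
    have : Z k = fun ω => ∑ p ∈ ({k} ×ˢ E), W p ω := by
      funext ω; rw [hZ]; exact Finset.sum_apply ω _ _
    rw [this]
    exact Finset.measurable_sum _ fun p _ => hWmeas p
  have hZpt : ∀ k ω, Z k ω = ∑ j ∈ E, c j * v ω k j := by
    intro k ω
    have h1 : Z k ω = ∑ p ∈ ({k} ×ˢ E), W p ω := by rw [hZ]; exact Finset.sum_apply ω _ _
    rw [h1, Finset.sum_product, Finset.sum_singleton]
  have hZbnd : ∀ᵐ ω ∂(ℙ : Measure Ω), ∀ k, |Z k ω| ≤ M := by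
    filter_upwards [hpm] with ω hω k
    rw [hZpt]
    refine (Finset.abs_sum_le_sum_abs _ _).trans ?_
    refine Finset.sum_le_sum fun j _ => ?_
    rw [abs_mul]
    rcases hω k j with h | h <;> rw [h] <;> norm_num
  -- mgf of the inner sums
  have hmgfZ : ∀ k t, mgf (Z k) ℙ t = ∏ j ∈ E, Real.cosh (t * c j) := by
    intro k t
    rw [hZ, hWindep.mgf_sum hWmeas, Finset.prod_product, Finset.prod_singleton]
    exact Finset.prod_congr rfl fun j _ => rad_mgf1 v k j (c j) t hmeas hdist
  have hcosh : ∀ t : ℝ, (∏ j ∈ E, Real.cosh (t * c j)) ≤ Real.exp (t ^ 2 * σ2 / 2) := by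
    intro t
    calc (∏ j ∈ E, Real.cosh (t * c j))
        ≤ ∏ j ∈ E, Real.exp ((t * c j) ^ 2 / 2) :=
          Finset.prod_le_prod (fun j _ => (Real.cosh_pos _).le)
            (fun j _ => Real.cosh_le_exp_half_sq _)
      _ = Real.exp (∑ j ∈ E, (t * c j) ^ 2 / 2) := (Real.exp_sum _ _).symm
      _ = Real.exp (t ^ 2 * σ2 / 2) := by
          congr 1
          rw [hσ2, Finset.mul_sum, ← Finset.sum_div]
          congr 1
          exact Finset.sum_congr rfl fun j _ => by ring
  -- independence of v_{k i} and Z k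
  have hXZ : ∀ k, IndepFun (fun ω => v ω k i) (Z k) ℙ := by
    intro k
    have hd : Disjoint ({(k, i)} : Finset (Fin s × Fin n)) ({k} ×ˢ E) := by
      simp [Finset.disjoint_left, hE]
    have h0 := hindep.indepFun_finset {(k, i)} ({k} ×ˢ E) hd (fun p => hmeas p.1 p.2)
    have h1 := h0.comp (_mγ := Real.measurableSpace)
      (φ := fun (u : (({(k, i)} : Finset (Fin s × Fin n)) : Type _) → ℝ) =>
        u ⟨(k, i), Finset.mem_singleton_self _⟩)
      (ψ := fun (u : ((({k} ×ˢ E : Finset (Fin s × Fin n))) : Type _) → ℝ) =>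
        ∑ p : (({k} ×ˢ E : Finset (Fin s × Fin n)) : Type _), c (p : Fin s × Fin n).2 * u p)
      (measurable_pi_apply _)
      (Finset.measurable_sum _ fun p _ => (measurable_pi_apply p).const_mul _)
    have e2 : ((fun (u : ((({k} ×ˢ E : Finset (Fin s × Fin n))) : Type _) → ℝ) =>
        ∑ p : (({k} ×ˢ E : Finset (Fin s × Fin n)) : Type _), c (p : Fin s × Fin n).2 * u p)
          ∘ (fun ω (p : ((({k} ×ˢ E : Finset (Fin s × Fin n))) : Type _)) =>
            v ω (p : Fin s × Fin n).1 (p : Fin s × Fin n).2)) = Z k := by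
      funext ω
      show ∑ p : (({k} ×ˢ E : Finset (Fin s × Fin n)) : Type _),
          c (p : Fin s × Fin n).2 * v ω (p : Fin s × Fin n).1 (p : Fin s × Fin n).2 = Z k ω
      rw [Finset.univ_eq_attach, Finset.sum_attach _
        (fun p : Fin s × Fin n => c p.2 * v ω p.1 p.2), Finset.sum_product,
        Finset.sum_singleton, hZpt]
    rw [e2] at h1
    exact h1
  -- the summands Y k
  set Y : Fin s → Ω → ℝ := fun k ω => v ω k i * Z k ω with hY
  have hYmeas : ∀ k, Measurable (Y k) := fun k => (hmeas k i).mul (hZmeas k)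
  have hYbnd : ∀ᵐ ω ∂(ℙ : Measure Ω), ∀ k, |Y k ω| ≤ M := by
    filter_upwards [hpm, hZbnd] with ω hω hZb k
    rw [hY]
    show |v ω k i * Z k ω| ≤ M
    rw [abs_mul]
    rcases hω k i with h | h <;> rw [h] <;> simpa using hZb k
  have hXbnd : ∀ k, ∀ᵐ ω ∂(ℙ : Measure Ω), |v ω k i| ≤ 1 := by
    intro k
    filter_upwards [hpm] with ω hω
    rcases hω k i with h | h <;> rw [h] <;> norm_num
  have hXint : ∀ k, Integrable (fun ω => v ω k i) ℙ := fun k =>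
    integrable_of_bound (hmeas k i).aestronglyMeasurable 1 (hXbnd k)
  have hexpZ : ∀ (t' : ℝ) k, Integrable (fun ω => Real.exp (t' * Z k ω)) ℙ := by
    intro t' k
    refine integrable_of_bound ((hZmeas k).const_mul t').exp.aestronglyMeasurable
      (Real.exp (|t'| * M)) ?_
    filter_upwards [hZbnd] with ω hω
    rw [Real.abs_exp]
    refine Real.exp_le_exp.2 ((le_abs_self _).trans ?_)
    rw [abs_mul]
    exact mul_le_mul_of_nonneg_left (hω k) (abs_nonneg _)
  have hmgfY : ∀ (t : ℝ) k, mgf (Y k) ℙ t ≤ Real.exp (t ^ 2 * σ2 / 2) := by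
    intro t k
    have hae : (fun ω => Real.exp (t * Y k ω)) =ᵐ[(ℙ : Measure Ω)]
        (fun ω => (1 + v ω k i) / 2 * Real.exp (t * Z k ω)
          + (1 - v ω k i) / 2 * Real.exp (-t * Z k ω)) := by
      filter_upwards [hpm] with ω hω
      have hYeq : Y k ω = v ω k i * Z k ω := rfl
      rcases hω k i with h | h <;> rw [hYeq, h] <;> norm_num
    have intA : Integrable (fun ω => (1 + v ω k i) / 2 * Real.exp (t * Z k ω)) ℙ := by
      refine integrable_of_bound ?_ (Real.exp (|t| * M)) ?_
      · exact ((measurable_const.add (hmeas k i)).div_const 2).mul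
          ((hZmeas k).const_mul t).exp |>.aestronglyMeasurable
      · filter_upwards [hpm, hZbnd] with ω hω hZb
        rw [abs_mul, Real.abs_exp]
        have h1 : |(1 + v ω k i) / 2| ≤ 1 := by
          rcases hω k i with h | h <;> rw [h] <;> norm_num
        have h2 : Real.exp (t * Z k ω) ≤ Real.exp (|t| * M) := by
          refine Real.exp_le_exp.2 ((le_abs_self _).trans ?_)
          rw [abs_mul]
          exact mul_le_mul_of_nonneg_left (hZb k) (abs_nonneg _)
        calc |(1 + v ω k i) / 2| * Real.exp (t * Z k ω)
            ≤ 1 * Real.exp (|t| * M) :=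
              mul_le_mul h1 h2 (Real.exp_pos _).le one_pos.le
          _ = Real.exp (|t| * M) := one_mul _
    have intB : Integrable (fun ω => (1 - v ω k i) / 2 * Real.exp (-t * Z k ω)) ℙ := by
      refine integrable_of_bound ?_ (Real.exp (|t| * M)) ?_
      · exact ((measurable_const.sub (hmeas k i)).div_const 2).mul
          ((hZmeas k).const_mul (-t)).exp |>.aestronglyMeasurable
      · filter_upwards [hpm, hZbnd] with ω hω hZb
        rw [abs_mul, Real.abs_exp]
        have h1 : |(1 - v ω k i) / 2| ≤ 1 := by
          rcases hω k i with h | h <;> rw [h] <;> norm_num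
        have h2 : Real.exp (-t * Z k ω) ≤ Real.exp (|t| * M) := by
          refine Real.exp_le_exp.2 ((le_abs_self _).trans ?_)
          rw [abs_mul, abs_neg]
          exact mul_le_mul_of_nonneg_left (hZb k) (abs_nonneg _)
        calc |(1 - v ω k i) / 2| * Real.exp (-t * Z k ω)
            ≤ 1 * Real.exp (|t| * M) :=
              mul_le_mul h1 h2 (Real.exp_pos _).le one_pos.le
          _ = Real.exp (|t| * M) := one_mul _
    have hIA : IndepFun (fun ω => (1 + v ω k i) / 2)
        (fun ω => Real.exp (t * Z k ω)) ℙ := by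
      have := (hXZ k).comp (φ := fun x : ℝ => (1 + x) / 2)
        (ψ := fun z : ℝ => Real.exp (t * z))
        ((measurable_const.add measurable_id).div_const 2)
        ((measurable_id.const_mul t).exp)
      exact this
    have hIB : IndepFun (fun ω => (1 - v ω k i) / 2)
        (fun ω => Real.exp (-t * Z k ω)) ℙ := by
      have := (hXZ k).comp (φ := fun x : ℝ => (1 - x) / 2)
        (ψ := fun z : ℝ => Real.exp (-t * z))
        ((measurable_const.sub measurable_id).div_const 2)
        ((measurable_id.const_mul (-t)).exp)
      exact this
    have hmeanA : ∫ ω, (1 + v ω k i) / 2 ∂(ℙ : Measure Ω) = 1 / 2 := by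
      rw [integral_div, integral_add (integrable_const 1) (hXint k),
        rad_mean v k i hmeas hdist, integral_const]
      simp
    have hmeanB : ∫ ω, (1 - v ω k i) / 2 ∂(ℙ : Measure Ω) = 1 / 2 := by
      rw [integral_div, integral_sub (integrable_const 1) (hXint k),
        rad_mean v k i hmeas hdist, integral_const]
      simp
    have key : mgf (Y k) ℙ t = (mgf (Z k) ℙ t + mgf (Z k) ℙ (-t)) / 2 := by
      rw [mgf, integral_congr_ae hae, integral_add intA intB,
        hIA.integral_fun_mul_eq_mul_integral ((measurable_const.add (hmeas k i)).div_const 2).aestronglyMeasurable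
          ((hZmeas k).const_mul t).exp.aestronglyMeasurable,
        hIB.integral_fun_mul_eq_mul_integral ((measurable_const.sub (hmeas k i)).div_const 2).aestronglyMeasurable
          ((hZmeas k).const_mul (-t)).exp.aestronglyMeasurable,
        hmeanA, hmeanB]
      rw [mgf, mgf]
      ring
    rw [key]
    have b1 : mgf (Z k) ℙ t ≤ Real.exp (t ^ 2 * σ2 / 2) := by
      rw [hmgfZ]; exact hcosh t
    have b2 : mgf (Z k) ℙ (-t) ≤ Real.exp (t ^ 2 * σ2 / 2) := by
      rw [hmgfZ]
      have := hcosh (-t)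
      rwa [neg_sq] at this
    linarith
  -- measurability of partial sums
  have hSmeas : ∀ F : Finset (Fin s), Measurable (∑ k ∈ F, Y k) := by
    intro F
    have : (∑ k ∈ F, Y k) = fun ω => ∑ k ∈ F, Y k ω := funext fun ω => Finset.sum_apply ω F Y
    rw [this]
    exact Finset.measurable_sum _ fun k _ => hYmeas k
  -- independence of Y b from partial sums over F not containing b
  have hYind : ∀ (F : Finset (Fin s)) (b : Fin s), b ∉ F →
      IndepFun (Y b) (∑ k ∈ F, Y k) ℙ := by
    intro F b hb
    have hd : Disjoint (({b} ×ˢ (Finset.univ : Finset (Fin n))) : Finset (Fin s × Fin n))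
        (F ×ˢ (Finset.univ : Finset (Fin n))) := by
      rw [Finset.disjoint_left]
      rintro ⟨p1, p2⟩ hp hq
      rw [Finset.mem_product, Finset.mem_singleton] at hp
      rw [Finset.mem_product] at hq
      exact hb (hp.1 ▸ hq.1)
    have h0 := hindep.indepFun_finset ({b} ×ˢ Finset.univ) (F ×ˢ Finset.univ) hd
      (fun p => hmeas p.1 p.2)
    have hφm : Measurable (fun (q : ((({b} ×ˢ (Finset.univ : Finset (Fin n))) :
          Finset (Fin s × Fin n)) : Type _) → ℝ) =>
        q ⟨(b, i), Finset.mem_product.2 ⟨Finset.mem_singleton_self b, Finset.mem_univ i⟩⟩ *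
          ∑ j ∈ E.attach, c j.1 *
            q ⟨(b, j.1), Finset.mem_product.2
              ⟨Finset.mem_singleton_self b, Finset.mem_univ _⟩⟩) := by
      refine (measurable_pi_apply _).mul ?_
      refine Finset.measurable_sum _ fun j _ => ?_
      exact (measurable_pi_apply _).const_mul _
    have hψm : Measurable (fun (q : (((F ×ˢ (Finset.univ : Finset (Fin n))) :
          Finset (Fin s × Fin n)) : Type _) → ℝ) =>
        ∑ k ∈ F.attach, (q ⟨(k.1, i), Finset.mem_product.2 ⟨k.2, Finset.mem_univ i⟩⟩ *
          ∑ j ∈ E.attach, c j.1 *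
            q ⟨(k.1, j.1), Finset.mem_product.2 ⟨k.2, Finset.mem_univ _⟩⟩)) := by
      refine Finset.measurable_sum _ fun k _ => ?_
      refine (measurable_pi_apply _).mul ?_
      refine Finset.measurable_sum _ fun j _ => ?_
      exact (measurable_pi_apply _).const_mul _
    have h1 := h0.comp hφm hψm
    have e1 : (fun ω => v ω b i * ∑ j ∈ E.attach, c j.1 * v ω b j.1) = Y b := by
      funext ω
      show v ω b i * ∑ j ∈ E.attach, c j.1 * v ω b j.1 = Y b ω
      rw [Finset.sum_attach E (fun j => c j * v ω b j), ← hZpt]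
    have e2 : (fun ω => ∑ k ∈ F.attach,
        (v ω k.1 i * ∑ j ∈ E.attach, c j.1 * v ω k.1 j.1)) = ∑ k ∈ F, Y k := by
      funext ω
      calc ∑ k ∈ F.attach, (v ω k.1 i * ∑ j ∈ E.attach, c j.1 * v ω k.1 j.1)
          = ∑ k ∈ F.attach, Y k.1 ω := by
            refine Finset.sum_congr rfl fun k _ => ?_
            rw [Finset.sum_attach E (fun j => c j * v ω k.1 j), ← hZpt]
        _ = ∑ k ∈ F, Y k ω := Finset.sum_attach F (fun k => Y k ω)
        _ = (∑ k ∈ F, Y k) ω := (Finset.sum_apply ω F Y).symm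
    rw [← e1, ← e2]
    exact h1
  -- mgf of the full sum
  have hmgfsum : ∀ (t : ℝ) (F : Finset (Fin s)),
      mgf (∑ k ∈ F, Y k) ℙ t = ∏ k ∈ F, mgf (Y k) ℙ t := by
    intro t F
    induction F using Finset.induction_on with
    | empty => simp [mgf_zero_fun]
    | @insert b F hb ih =>
      rw [Finset.sum_insert hb, Finset.prod_insert hb, ← ih]
      exact IndepFun.mgf_add' (hYind F b hb) (hYmeas b).aestronglyMeasurable
        (hSmeas F).aestronglyMeasurable
  set T : Ω → ℝ := ∑ k : Fin s, Y k with hT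
  have hTpt : ∀ ω, T ω = ∑ k : Fin s, Y k ω := fun ω => Finset.sum_apply ω Finset.univ Y
  have hTbnd : ∀ᵐ ω ∂(ℙ : Measure Ω), |T ω| ≤ s * M := by
    filter_upwards [hYbnd] with ω hω
    rw [hTpt]
    refine (Finset.abs_sum_le_sum_abs _ _).trans ?_
    calc ∑ k : Fin s, |Y k ω| ≤ ∑ _k : Fin s, M := Finset.sum_le_sum fun k _ => hω k
      _ = s * M := by rw [Finset.sum_const, Finset.card_univ, Fintype.card_fin, nsmul_eq_mul]
  have hTint : Integrable (fun ω => Real.exp (u * T ω)) ℙ := by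
    refine integrable_of_bound ((hSmeas Finset.univ).const_mul u).exp.aestronglyMeasurable
      (Real.exp (|u| * (s * M))) ?_
    filter_upwards [hTbnd] with ω hω
    rw [Real.abs_exp]
    refine Real.exp_le_exp.2 ((le_abs_self _).trans ?_)
    rw [abs_mul]
    exact mul_le_mul_of_nonneg_left hω (abs_nonneg _)
  have hch := measure_ge_le_exp_mul_mgf (μ := (ℙ : Measure Ω)) (X := T) a hu hTint
  have hprod : mgf T ℙ u ≤ Real.exp (s * (u ^ 2 * σ2 / 2)) := by
    rw [hT, hmgfsum u Finset.univ]
    calc ∏ k : Fin s, mgf (Y k) ℙ u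
        ≤ ∏ _k : Fin s, Real.exp (u ^ 2 * σ2 / 2) :=
          Finset.prod_le_prod (fun k _ => mgf_nonneg) (fun k _ => hmgfY u k)
      _ = Real.exp (u ^ 2 * σ2 / 2) ^ s := by
          rw [Finset.prod_const, Finset.card_univ, Fintype.card_fin]
      _ = Real.exp (s * (u ^ 2 * σ2 / 2)) := by rw [← Real.exp_nat_mul]
  have hsetT : {ω | a ≤ ∑ k : Fin s, ∑ j ∈ E, c j * (v ω k i * v ω k j)}
      = {ω | a ≤ T ω} := by
    ext ω
    simp only [Set.mem_setOf_eq]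
    have hTω : T ω = ∑ k : Fin s, ∑ j ∈ E, c j * (v ω k i * v ω k j) := by
      rw [hTpt]
      refine Finset.sum_congr rfl fun k _ => ?_
      show v ω k i * Z k ω = _
      rw [hZpt, Finset.mul_sum]
      exact Finset.sum_congr rfl fun j _ => by ring
    rw [hTω]
  rw [hsetT]
  refine hch.trans ?_
  calc Real.exp (-u * a) * mgf T ℙ u
      ≤ Real.exp (-u * a) * Real.exp (s * (u ^ 2 * σ2 / 2)) :=
        mul_le_mul_of_nonneg_left hprod (Real.exp_pos _).le
    _ = Real.exp (-u * a + s * (u ^ 2 * σ2 / 2)) := (Real.exp_add _ _).symm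



set_option maxHeartbeats 1000000 in
lemma rad_coord (hs : 0 < s) (A : Matrix (Fin n) (Fin n) ℝ)
    (v : Ω → Fin s → Fin n → ℝ)
    (hmeas : ∀ k j, Measurable (fun ω => v ω k j))
    (hdist : ∀ k j, Measure.map (fun ω => v ω k j) ℙ = radMeasure)
    (hindep : iIndepFun
      (fun p : Fin s × Fin n => fun ω => v ω p.1 p.2) ℙ)
    (i : Fin n) (ε : ℝ) (hε : 0 < ε) :
    ℙ {ω | ¬ (|(1 / (s : ℝ)) * (∑ k, v ω k i * A.mulVec (v ω k) i) - A i i| ^ 2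
        ≤ ε ^ 2 * ((∑ j, A i j ^ 2) - A i i ^ 2))}
      ≤ ENNReal.ofReal (2 * Real.exp (-(s : ℝ) * ε ^ 2 / 2)) := by
  classical
  set σ2 : ℝ := ∑ j ∈ Finset.univ.erase i, A i j ^ 2 with hσ2
  have hσeq : (∑ j, A i j ^ 2) - A i i ^ 2 = σ2 := by
    have h := Finset.sum_erase_add Finset.univ (fun j => A i j ^ 2) (Finset.mem_univ i)
    beta_reduce at h
    rw [hσ2]
    linarith
  have hσnonneg : 0 ≤ σ2 := Finset.sum_nonneg fun j _ => sq_nonneg _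
  have hpm := rad_pm v hmeas hdist
  set S : Ω → ℝ := fun ω => ∑ k : Fin s, ∑ j ∈ Finset.univ.erase i,
    A i j * (v ω k i * v ω k j) with hS
  -- a.e. identity for the estimator error
  have hkey : ∀ᵐ ω ∂(ℙ : Measure Ω),
      (1 / (s : ℝ)) * (∑ k, v ω k i * A.mulVec (v ω k) i) - A i i = S ω / s := by
    filter_upwards [hpm] with ω hω
    have hterm : ∀ k : Fin s, v ω k i * A.mulVec (v ω k) i
        = A i i + ∑ j ∈ Finset.univ.erase i, A i j * (v ω k i * v ω k j) := by
      intro k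
      have hmv : A.mulVec (v ω k) i = ∑ j, A i j * v ω k j := by
        simp [Matrix.mulVec, dotProduct]
      have hsq : v ω k i * v ω k i = 1 := by
        rcases hω k i with h | h <;> rw [h] <;> norm_num
      rw [hmv, Finset.mul_sum,
        ← Finset.sum_erase_add Finset.univ (fun j => v ω k i * (A i j * v ω k j))
          (Finset.mem_univ i)]
      have : v ω k i * (A i i * v ω k i) = A i i := by
        rw [show v ω k i * (A i i * v ω k i) = A i i * (v ω k i * v ω k i) by ring, hsq,
          mul_one]
      rw [this]
      rw [add_comm]
      congr 1
      exact Finset.sum_congr rfl fun j _ => by ring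
    have hsum : (∑ k, v ω k i * A.mulVec (v ω k) i) = s * A i i + S ω := by
      rw [Finset.sum_congr rfl fun k _ => hterm k, Finset.sum_add_distrib, hS,
        Finset.sum_const, Finset.card_univ, Fintype.card_fin, nsmul_eq_mul]
    rw [hsum]
    have hs' : (s : ℝ) ≠ 0 := Nat.cast_ne_zero.2 hs.ne'
    field_simp
    ring
  rcases eq_or_lt_of_le hσnonneg with hσ0 | hσpos
  · -- degenerate case: variance is zero
    have hAij : ∀ j ∈ Finset.univ.erase i, A i j = 0 := by
      intro j hj
      have h0 := (Finset.sum_eq_zero_iff_of_nonneg (fun j _ => sq_nonneg (A i j))).1 hσ0.symm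
      exact pow_eq_zero_iff (n := 2) (by norm_num) |>.1 (h0 j hj)
    have hSzero : ∀ ω, S ω = 0 := by
      intro ω
      rw [hS]
      refine Finset.sum_eq_zero fun k _ => Finset.sum_eq_zero fun j hj => ?_
      rw [hAij j hj, zero_mul]
    have : ℙ {ω | ¬ (|(1 / (s : ℝ)) * (∑ k, v ω k i * A.mulVec (v ω k) i) - A i i| ^ 2
        ≤ ε ^ 2 * ((∑ j, A i j ^ 2) - A i i ^ 2))} = 0 := by
      rw [measure_eq_zero_iff_ae_notMem]
      filter_upwards [hkey] with ω hω
      intro hbad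
      apply hbad
      rw [hω, hSzero ω, hσeq, ← hσ0]
      norm_num
    rw [this]
    exact bot_le
  · -- main case
    set u : ℝ := ε / Real.sqrt σ2 with hu_def
    set a : ℝ := s * ε * Real.sqrt σ2 with ha_def
    have hsqrt2 : 0 < Real.sqrt σ2 := Real.sqrt_pos.2 hσpos
    have hu : 0 ≤ u := le_of_lt (div_pos hε hsqrt2)
    have hua : u * a = s * ε ^ 2 := by
      rw [hu_def, ha_def]
      field_simp
    have hu2 : u ^ 2 * σ2 / 2 = ε ^ 2 / 2 := by
      rw [hu_def, div_pow, Real.sq_sqrt hσnonneg]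
      field_simp
    have hexp : -u * a + (s : ℝ) * (u ^ 2 * σ2 / 2) = -(s : ℝ) * ε ^ 2 / 2 := by
      have e : -u * a + (s : ℝ) * (u ^ 2 * σ2 / 2) = -(u * a) + (s : ℝ) * (ε ^ 2 / 2) := by
        rw [hu2]; ring
      rw [e, hua]; ring
    have h1 := rad_tail v hmeas hdist hindep (A i) i u a hu
    have h2 := rad_tail v hmeas hdist hindep (fun j => -A i j) i u a hu
    rw [← hσ2, hexp] at h1
    have hσ2' : (∑ j ∈ Finset.univ.erase i, (-A i j) ^ 2) = σ2 := by
      rw [hσ2]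
      exact Finset.sum_congr rfl fun j _ => neg_sq _
    rw [hσ2', hexp] at h2
    have hnegset : ∀ ω, (∑ k : Fin s, ∑ j ∈ Finset.univ.erase i,
        -A i j * (v ω k i * v ω k j)) = -S ω := by
      intro ω
      rw [hS]
      simp [neg_mul, Finset.sum_neg_distrib]
    have hset2 : {ω | a ≤ ∑ k : Fin s, ∑ j ∈ Finset.univ.erase i,
        -A i j * (v ω k i * v ω k j)} = {ω | a ≤ -S ω} := by
      ext ω
      simp only [Set.mem_setOf_eq, hnegset ω]
    rw [hset2] at h2
    have hcast : (0 : ℝ) < s := by exact_mod_cast hs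
    have hb1 : ℙ {ω | a ≤ S ω} ≤ ENNReal.ofReal (Real.exp (-(s : ℝ) * ε ^ 2 / 2)) :=
      (ENNReal.le_ofReal_iff_toReal_le (measure_ne_top _ _) (Real.exp_pos _).le).2 h1
    have hb2 : ℙ {ω | a ≤ -S ω} ≤ ENNReal.ofReal (Real.exp (-(s : ℝ) * ε ^ 2 / 2)) :=
      (ENNReal.le_ofReal_iff_toReal_le (measure_ne_top _ _) (Real.exp_pos _).le).2 h2
    have hmono : ℙ {ω | ¬ (|(1 / (s : ℝ)) * (∑ k, v ω k i * A.mulVec (v ω k) i) - A i i| ^ 2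
        ≤ ε ^ 2 * ((∑ j, A i j ^ 2) - A i i ^ 2))}
        ≤ ℙ ({ω | a ≤ S ω} ∪ {ω | a ≤ -S ω}) := by
      refine measure_mono_ae ?_
      filter_upwards [hkey] with ω hω
      intro hbad
      have habs : a ≤ |S ω| := by
        by_contra hcon
        push_neg at hcon
        apply hbad
        rw [hω, hσeq]
        have e1 : |S ω / (s : ℝ)| ^ 2 = |S ω| ^ 2 / (s : ℝ) ^ 2 := by
          rw [abs_div, abs_of_pos hcast, div_pow]
        rw [e1, div_le_iff₀ (by positivity)]
        have e2 : a ^ 2 = ε ^ 2 * σ2 * (s : ℝ) ^ 2 := by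
          rw [ha_def, mul_pow, mul_pow, Real.sq_sqrt hσnonneg]
          ring
        calc |S ω| ^ 2 ≤ a ^ 2 := pow_le_pow_left₀ (abs_nonneg _) hcon.le 2
          _ = ε ^ 2 * σ2 * (s : ℝ) ^ 2 := e2
      rcases le_abs.1 habs with h | h
      · exact Or.inl h
      · exact Or.inr h
    calc ℙ {ω | ¬ (|(1 / (s : ℝ)) * (∑ k, v ω k i * A.mulVec (v ω k) i) - A i i| ^ 2
          ≤ ε ^ 2 * ((∑ j, A i j ^ 2) - A i i ^ 2))}
        ≤ ℙ ({ω | a ≤ S ω} ∪ {ω | a ≤ -S ω}) := hmono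
      _ ≤ ℙ {ω | a ≤ S ω} + ℙ {ω | a ≤ -S ω} := measure_union_le _ _
      _ ≤ ENNReal.ofReal (Real.exp (-(s : ℝ) * ε ^ 2 / 2))
          + ENNReal.ofReal (Real.exp (-(s : ℝ) * ε ^ 2 / 2)) := add_le_add hb1 hb2
      _ = ENNReal.ofReal (2 * Real.exp (-(s : ℝ) * ε ^ 2 / 2)) := by
          rw [← ENNReal.ofReal_add (Real.exp_pos _).le (Real.exp_pos _).le, two_mul]


end Tail2

theorem rademacher_diagonal_estimator_full_diagonal
    {n s : ℕ} (hs : 0 < s) (A : Matrix (Fin n) (Fin n) ℝ)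
    {Ω : Type*} [MeasureSpace Ω] [IsProbabilityMeasure (ℙ : Measure Ω)]
    (v : Ω → Fin s → Fin n → ℝ)
    (hmeas : ∀ k j, Measurable (fun ω => v ω k j))
    (hdist : ∀ k j, Measure.map (fun ω => v ω k j) ℙ = radMeasure)
    (hindep : iIndepFun
      (fun p : Fin s × Fin n => fun ω => v ω p.1 p.2) ℙ)
    (R : Ω → Fin n → ℝ)
    (hR : R = fun ω i => (1 / (s : ℝ)) * ∑ k, v ω k i * A.mulVec (v ω k) i)
    (ε δ : ℝ) (hε : 0 < ε) (hδ : δ ∈ Set.Ioo (0:ℝ) 1)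
    (hquery : (s : ℝ) > 2 * Real.log (2 * n / δ) / ε ^ 2) :
    ENNReal.ofReal (1 - δ) ≤
      ℙ {ω | ∑ i, |R ω i - A i i| ^ 2 ≤ ε ^ 2 * ∑ i, ((∑ j, A i j ^ 2) - A i i ^ 2)} := by
  classical
  rcases Nat.eq_zero_or_pos n with hn | hn
  · subst hn
    have hset : {ω | ∑ i, |R ω i - A i i| ^ 2
        ≤ ε ^ 2 * ∑ i, ((∑ j, A i j ^ 2) - A i i ^ 2)} = Set.univ := by
      ext ω
      simp
    rw [hset, measure_univ]
    exact ENNReal.ofReal_le_one.2 (by linarith [hδ.1])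
  subst hR
  set bad : Fin n → Set Ω := fun i =>
    {ω | ¬ (|(1 / (s : ℝ)) * (∑ k, v ω k i * A.mulVec (v ω k) i) - A i i| ^ 2
      ≤ ε ^ 2 * ((∑ j, A i j ^ 2) - A i i ^ 2))} with hbad
  have hcb : ∀ i, ℙ (bad i) ≤ ENNReal.ofReal (2 * Real.exp (-(s : ℝ) * ε ^ 2 / 2)) :=
    fun i => rad_coord hs A v hmeas hdist hindep i ε hε
  have hmv : ∀ (k : Fin s) (i : Fin n), Measurable (fun ω => A.mulVec (v ω k) i) := by
    intro k i
    have : (fun ω => A.mulVec (v ω k) i) = fun ω => ∑ j, A i j * v ω k j := by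
      funext ω
      simp [Matrix.mulVec, dotProduct]
    rw [this]
    exact Finset.measurable_sum _ fun j _ => (hmeas k j).const_mul _
  have hfi : ∀ i : Fin n, Measurable (fun ω =>
      |(1 / (s : ℝ)) * (∑ k, v ω k i * A.mulVec (v ω k) i) - A i i| ^ 2) := by
    intro i
    exact ((((Finset.measurable_sum _ fun k _ => (hmeas k i).mul (hmv k i)).const_mul
      (1 / (s : ℝ))).sub measurable_const).abs.pow_const 2)
  have hbad_meas : ∀ i, MeasurableSet (bad i) := fun i =>
    (measurableSet_le (hfi i) measurable_const).compl
  -- numeric bound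
  have hn' : (0 : ℝ) < n := by exact_mod_cast hn
  have hδ0 := hδ.1
  have hx : (0 : ℝ) < 2 * n / δ := by positivity
  have h1 : 2 * Real.log (2 * n / δ) < s * ε ^ 2 := by
    rw [gt_iff_lt, div_lt_iff₀ (by positivity : (0:ℝ) < ε ^ 2)] at hquery
    linarith
  have h2 : Real.exp (-(s : ℝ) * ε ^ 2 / 2) < δ / (2 * n) := by
    have hlt : -(s : ℝ) * ε ^ 2 / 2 < -Real.log (2 * n / δ) := by linarith
    calc Real.exp (-(s : ℝ) * ε ^ 2 / 2) < Real.exp (-Real.log (2 * n / δ)) :=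
          Real.exp_lt_exp.2 hlt
      _ = δ / (2 * n) := by rw [Real.exp_neg, Real.exp_log hx, inv_div]
  have hnum : (n : ℝ) * (2 * Real.exp (-(s : ℝ) * ε ^ 2 / 2)) ≤ δ := by
    have hle : (n : ℝ) * (2 * Real.exp (-(s : ℝ) * ε ^ 2 / 2)) ≤ n * (2 * (δ / (2 * n))) := by
      have := mul_le_mul_of_nonneg_left (mul_le_mul_of_nonneg_left h2.le (by norm_num : (0:ℝ) ≤ 2)) hn'.le
      exact this
    have heq : (n : ℝ) * (2 * (δ / (2 * n))) = δ := by
      field_simp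
    linarith
  have hunion : ℙ (⋃ i, bad i) ≤ ENNReal.ofReal δ := by
    calc ℙ (⋃ i, bad i) ≤ ∑ i : Fin n, ℙ (bad i) := measure_iUnion_fintype_le _ _
      _ ≤ ∑ _i : Fin n, ENNReal.ofReal (2 * Real.exp (-(s : ℝ) * ε ^ 2 / 2)) :=
          Finset.sum_le_sum fun i _ => hcb i
      _ = (n : ENNReal) * ENNReal.ofReal (2 * Real.exp (-(s : ℝ) * ε ^ 2 / 2)) := by
          rw [Finset.sum_const, Finset.card_univ, Fintype.card_fin, nsmul_eq_mul]
      _ = ENNReal.ofReal ((n : ℝ) * (2 * Real.exp (-(s : ℝ) * ε ^ 2 / 2))) := by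
          rw [ENNReal.ofReal_mul (by positivity : (0:ℝ) ≤ (n:ℝ)), ENNReal.ofReal_natCast]
      _ ≤ ENNReal.ofReal δ := ENNReal.ofReal_le_ofReal hnum
  have hss : (⋃ i, bad i)ᶜ ⊆ {ω | ∑ i, |(fun ω i => (1 / (s : ℝ)) *
      ∑ k, v ω k i * A.mulVec (v ω k) i) ω i - A i i| ^ 2
      ≤ ε ^ 2 * ∑ i, ((∑ j, A i j ^ 2) - A i i ^ 2)} := by
    intro ω hω
    simp only [Set.mem_compl_iff, Set.mem_iUnion, not_exists] at hω
    have hgood : ∀ i, |(1 / (s : ℝ)) * (∑ k, v ω k i * A.mulVec (v ω k) i) - A i i| ^ 2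
        ≤ ε ^ 2 * ((∑ j, A i j ^ 2) - A i i ^ 2) := fun i => not_not.1 (hω i)
    show (∑ i, |(1 / (s : ℝ)) * (∑ k, v ω k i * A.mulVec (v ω k) i) - A i i| ^ 2)
      ≤ ε ^ 2 * ∑ i, ((∑ j, A i j ^ 2) - A i i ^ 2)
    rw [Finset.mul_sum]
    exact Finset.sum_le_sum fun i _ => hgood i
  calc ENNReal.ofReal (1 - δ) = 1 - ENNReal.ofReal δ := by
        rw [ENNReal.ofReal_sub _ hδ0.le, ENNReal.ofReal_one]
    _ ≤ 1 - ℙ (⋃ i, bad i) := tsub_le_tsub_left hunion 1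
    _ = ℙ ((⋃ i, bad i)ᶜ) := (prob_compl_eq_one_sub (MeasurableSet.iUnion hbad_meas)).symm
    _ ≤ _ := measure_mono hss
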